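/- Let f : (0,∞) → ℝ be convex with f(1) = 0 and f(x) = x·f(1/x). Define F_f(e) := e·f((1−e)/e) for e ∈ (0,1). Then F_f is nonnegative, convex on (0,1), symmetric about 1/2 (F_f(1/2 + ε) = F_f(1/2 − ε) for |ε| < 1/2), and F_f(1/2) = 0. -/

import Mathlib

lemma f_nonneg_aux (f : ℝ → ℝ) (hconv : ConvexOn ℝ (Set.Ioi 0) f) (hf1 : f 1 = 0)
    (hdiamond : ∀ x : ℝ, 0 < x → f x = x * f (1 / x)) :
    ∀ x : ℝ, 0 < x → 0 ≤ f x := by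
  intro x hx
  have hx' : (0:ℝ) < 1 / x := by positivity
  have hx1 : (0:ℝ) < x + 1 := by linarith
  have ha : (0:ℝ) ≤ 1 / (x + 1) := by positivity
  have hb : (0:ℝ) ≤ x / (x + 1) := by positivity
  have hab : 1 / (x + 1) + x / (x + 1) = 1 := by
    field_simp
    ring
  have hcomb := hconv.2 (Set.mem_Ioi.mpr hx) (Set.mem_Ioi.mpr hx') ha hb hab
  simp only [smul_eq_mul] at hcomb
  have harg : 1 / (x + 1) * x + x / (x + 1) * (1 / x) = 1 := by
    field_simp
  rw [harg, hf1] at hcomb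
  have hd := hdiamond x hx
  have hfx : f (1 / x) = f x / x := by
    rw [eq_div_iff hx.ne']
    nlinarith [hd]
  rw [hfx] at hcomb
  have h2 : 1 / (x + 1) * f x + x / (x + 1) * (f x / x) = (2 / (x + 1)) * f x := by
    field_simp
    ring
  rw [h2] at hcomb
  have h4 : (0:ℝ) < 2 / (x + 1) := by positivity
  by_contra hneg
  push_neg at hneg
  nlinarith [mul_pos h4 (neg_pos.mpr hneg)]

theorem Ff_convex_nonneg_symmetric
    (f : ℝ → ℝ) (hconv : ConvexOn ℝ (Set.Ioi 0) f) (hf1 : f 1 = 0)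
    (hdiamond : ∀ x : ℝ, 0 < x → f x = x * f (1 / x))
    (F : ℝ → ℝ) (hF : ∀ e : ℝ, F e = e * f ((1 - e) / e)) :
    (∀ e ∈ Set.Ioo (0:ℝ) 1, 0 ≤ F e) ∧
    ConvexOn ℝ (Set.Ioo (0:ℝ) 1) F ∧
    (∀ ε : ℝ, |ε| < 1 / 2 → F (1 / 2 + ε) = F (1 / 2 - ε)) ∧
    F (1 / 2) = 0 := by
  have hfnn := f_nonneg_aux f hconv hf1 hdiamond
  refine ⟨?_, ?_, ?_, ?_⟩
  · intro e he
    obtain ⟨h0, h1⟩ := he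
    rw [hF]
    have : (0:ℝ) < (1 - e) / e := div_pos (by linarith) h0
    exact mul_nonneg h0.le (hfnn _ this)
  · refine ⟨convex_Ioo 0 1, ?_⟩
    intro x hx y hy a b ha hb hab
    obtain ⟨hx0, hx1⟩ := hx
    obtain ⟨hy0, hy1⟩ := hy
    simp only [smul_eq_mul]
    have he0 : 0 < a * x + b * y := by
      rcases ha.lt_or_eq with h | h
      · nlinarith [mul_pos h hx0, mul_nonneg hb hy0.le]
      · have hb1 : b = 1 := by linarith
        rw [← h, hb1]; nlinarith
    have hp : (1 - x) / x ∈ Set.Ioi (0:ℝ) := Set.mem_Ioi.mpr (div_pos (by linarith) hx0)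
    have hq : (1 - y) / y ∈ Set.Ioi (0:ℝ) := Set.mem_Ioi.mpr (div_pos (by linarith) hy0)
    have hw1 : (0:ℝ) ≤ a * x / (a * x + b * y) :=
      div_nonneg (mul_nonneg ha hx0.le) he0.le
    have hw2 : (0:ℝ) ≤ b * y / (a * x + b * y) :=
      div_nonneg (mul_nonneg hb hy0.le) he0.le
    have hwsum : a * x / (a * x + b * y) + b * y / (a * x + b * y) = 1 := by
      field_simp
    have hcomb := hconv.2 hp hq hw1 hw2 hwsum
    simp only [smul_eq_mul] at hcomb
    have h1e : a * (1 - x) + b * (1 - y) = 1 - (a * x + b * y) := by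
      linear_combination hab
    have harg : a * x / (a * x + b * y) * ((1 - x) / x)
        + b * y / (a * x + b * y) * ((1 - y) / y)
        = (a * (1 - x) + b * (1 - y)) / (a * x + b * y) := by
      field_simp
    rw [harg, h1e] at hcomb
    rw [hF, hF, hF]
    have key := mul_le_mul_of_nonneg_left hcomb he0.le
    have hrw : (a * x + b * y) *
        (a * x / (a * x + b * y) * f ((1 - x) / x)
          + b * y / (a * x + b * y) * f ((1 - y) / y))
        = a * (x * f ((1 - x) / x)) + b * (y * f ((1 - y) / y)) := by
      field_simp
    rw [hrw] at key
    exact key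
  · intro ε hε
    rw [abs_lt] at hε
    have h1 : (0:ℝ) < 1 / 2 + ε := by linarith [hε.1]
    have h2 : (0:ℝ) < 1 / 2 - ε := by linarith [hε.2]
    rw [hF, hF]
    have hargL : (1 - (1 / 2 + ε)) / (1 / 2 + ε) = (1 / 2 - ε) / (1 / 2 + ε) := by ring_nf
    have hargR : (1 - (1 / 2 - ε)) / (1 / 2 - ε) = (1 / 2 + ε) / (1 / 2 - ε) := by ring_nf
    rw [hargL, hargR]
    have hd := hdiamond ((1 / 2 - ε) / (1 / 2 + ε)) (div_pos h2 h1)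
    rw [one_div_div] at hd
    rw [hd, ← mul_assoc]
    have : (1 / 2 + ε) * ((1 / 2 - ε) / (1 / 2 + ε)) = 1 / 2 - ε := by
      rw [mul_comm]
      exact div_mul_cancel₀ _ h1.ne'
    rw [this]
  · rw [hF]
    norm_num [hf1]
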